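/- For the cross-partition query formula of the pre/post-boundary PSP index: for s ∈ G_i, t ∈ G_j with i ≠ j, where s and t are both non-boundary, d_G(s,t) = min over b_p ∈ B_i and b_q ∈ B_j of ( d_G(s,b_p) + d_G(b_p,b_q) + d_G(b_q,t) ). -/

import Mathlib

open scoped ENNReal

/-- Cost of the walk `s :: p ++ [t]`: `p` is the list of intermediate vertices, a missing
edge has weight `⊤`. -/
noncomputable def pathCost {V : Type*} (w : V → V → ℝ≥0∞) : V → List V → V → ℝ≥0∞
  | s, [], t => w s t
  | s, x :: xs, t => w s x + pathCost w x xs t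

/-- Shortest-path distance induced by the weight function `w`. -/
noncomputable def gdist {V : Type*} [DecidableEq V] (w : V → V → ℝ≥0∞) (s t : V) : ℝ≥0∞ :=
  if s = t then 0 else ⨅ p : List V, pathCost w s p t

set_option linter.unusedSectionVars false

section Aux
variable {V : Type*} [DecidableEq V] (w : V → V → ℝ≥0∞)

lemma pathCost_append (p q : List V) (a x b : V) :
    pathCost w a (p ++ x :: q) b = pathCost w a p x + pathCost w x q b := by
  induction p generalizing a with
  | nil => simp [pathCost]
  | cons y ys ih => simp [pathCost, ih, add_assoc]

lemma pathCost_reverse (hsymm : ∀ u v, w u v = w v u) (p : List V) (a b : V) :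
    pathCost w a p b = pathCost w b p.reverse a := by
  induction p generalizing a with
  | nil => simp [pathCost, hsymm a b]
  | cons x xs ih =>
    simp only [pathCost, List.reverse_cons]
    rw [ih x, pathCost_append]
    simp [pathCost, hsymm x a, add_comm]

lemma gdist_le_pathCost (s t : V) (p : List V) : gdist w s t ≤ pathCost w s p t := by
  unfold gdist
  split
  · exact zero_le
  · exact iInf_le _ p

lemma gdist_symm (hsymm : ∀ u v, w u v = w v u) (a b : V) : gdist w a b = gdist w b a := by
  have key : ∀ x y : V, gdist w x y ≤ gdist w y x := by
    intro x y
    by_cases h : x = y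
    · simp [gdist, h]
    · rw [gdist, gdist, if_neg h, if_neg (Ne.symm h)]
      refine le_iInf fun p => ?_
      rw [pathCost_reverse w hsymm p y x]
      exact iInf_le _ p.reverse
  exact le_antisymm (key a b) (key b a)

lemma gdist_edge_tri (a b c : V) : gdist w a c ≤ w a b + gdist w b c := by
  by_cases hbc : b = c
  · subst hbc
    have h := gdist_le_pathCost w a b []
    simp only [pathCost] at h
    have hz : gdist w b b = 0 := by simp [gdist]
    rw [hz, add_zero]
    exact h
  · have e : gdist w b c = ⨅ p, pathCost w b p c := by rw [gdist, if_neg hbc]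
    rw [e, ENNReal.add_iInf]
    refine le_iInf fun p => ?_
    calc gdist w a c ≤ pathCost w a (b :: p) c := gdist_le_pathCost w a c (b :: p)
      _ = w a b + pathCost w b p c := by simp [pathCost]

lemma gdist_pathCost_tri (a b c : V) (p : List V) :
    gdist w a c ≤ pathCost w a p b + gdist w b c := by
  induction p generalizing a with
  | nil =>
    have := gdist_edge_tri w a b c
    simpa [pathCost] using this
  | cons x xs ih =>
    calc gdist w a c ≤ w a x + gdist w x c := gdist_edge_tri w a x c
      _ ≤ w a x + (pathCost w x xs b + gdist w b c) := by gcongr; exact ih x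
      _ = pathCost w a (x :: xs) b + gdist w b c := by simp [pathCost, add_assoc]

lemma gdist_tri (a b c : V) : gdist w a c ≤ gdist w a b + gdist w b c := by
  by_cases hab : a = b
  · subst hab
    have hz : gdist w a a = 0 := by simp [gdist]
    rw [hz, zero_add]
  · have e : gdist w a b = ⨅ p, pathCost w a p b := by rw [gdist, if_neg hab]
    rw [e, ENNReal.iInf_add]
    exact le_iInf fun p => gdist_pathCost_tri w a b c p

lemma first_boundary {k : ℕ} (part : V → Fin k) (B : Finset V)
    (hB : ∀ v, v ∈ B ↔ ∃ u, part u ≠ part v ∧ w v u ≠ ⊤) (t : V) :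
    ∀ (p : List V) (s : V), part s ≠ part t → pathCost w s p t ≠ ⊤ →
      ∃ bp ∈ B, part bp = part s ∧
        ∃ q : List V, gdist w s bp + pathCost w bp q t ≤ pathCost w s p t := by
  intro p
  induction p with
  | nil =>
    intro s hst hfin
    simp only [pathCost] at hfin
    have hsB : s ∈ B := (hB s).2 ⟨t, Ne.symm hst, hfin⟩
    exact ⟨s, hsB, rfl, [], by simp [gdist]⟩
  | cons x xs ih =>
    intro s hst hfin
    simp only [pathCost] at hfin ⊢
    have hwsx : w s x ≠ ⊤ := fun h => hfin (by simp [h])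
    have hrest : pathCost w x xs t ≠ ⊤ := fun h => hfin (by simp [h])
    by_cases hx : part x = part s
    · obtain ⟨bp, hbpB, hbppart, q, hq⟩ := ih x (by rw [hx]; exact hst) hrest
      refine ⟨bp, hbpB, hbppart.trans hx, q, ?_⟩
      calc gdist w s bp + pathCost w bp q t
          ≤ (w s x + gdist w x bp) + pathCost w bp q t := by
            gcongr; exact gdist_edge_tri w s x bp
        _ = w s x + (gdist w x bp + pathCost w bp q t) := by rw [add_assoc]
        _ ≤ w s x + pathCost w x xs t := by gcongr
    · have hsB : s ∈ B := (hB s).2 ⟨x, fun h => hx h, hwsx⟩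
      exact ⟨s, hsB, rfl, x :: xs, by simp [gdist, pathCost]⟩

end Aux

/-- Correctness of the cross-partition query formula of the pre/post-boundary PSP index:
for non-boundary `s ∈ G_i` and `t ∈ G_j` with `i ≠ j`,
`d_G(s,t) = min over b_p ∈ B_i, b_q ∈ B_j of (d_G(s,b_p) + d_G(b_p,b_q) + d_G(b_q,t))`. -/
theorem cross_partition_query_correct
    {V : Type*} [Fintype V] [DecidableEq V] {k : ℕ}
    (part : V → Fin k) (B : Finset V) (w : V → V → ℝ≥0∞)
    (hsymm : ∀ u v, w u v = w v u)
    (hpos : ∀ u v, u ≠ v → 0 < w u v)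
    -- boundary vertices are exactly the vertices with a neighbor outside their partition
    (hB : ∀ v, v ∈ B ↔ ∃ u, part u ≠ part v ∧ w v u ≠ ⊤)
    (s t : V) (hij : part s ≠ part t) (hs : s ∉ B) (ht : t ∉ B) :
    gdist w s t =
      ⨅ bp ∈ (B.filter fun b => part b = part s),
        ⨅ bq ∈ (B.filter fun b => part b = part t),
          gdist w s bp + gdist w bp bq + gdist w bq t := by
  have hst : s ≠ t := fun h => hij (by rw [h])
  apply le_antisymm
  · refine le_iInf fun bp => le_iInf fun _ => le_iInf fun bq => le_iInf fun _ => ?_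
    calc gdist w s t ≤ gdist w s bq + gdist w bq t := gdist_tri w s bq t
      _ ≤ (gdist w s bp + gdist w bp bq) + gdist w bq t := by
          gcongr; exact gdist_tri w s bp bq
  · have e : gdist w s t = ⨅ p, pathCost w s p t := by rw [gdist, if_neg hst]
    rw [e]
    refine le_iInf fun p => ?_
    by_cases hfin : pathCost w s p t = ⊤
    · rw [hfin]; exact le_top
    obtain ⟨bp, hbpB, hbppart, q, hq⟩ := first_boundary w part B hB t p s hij hfin
    have hbt : part bp ≠ part t := by rw [hbppart]; exact hij
    have hqfin : pathCost w bp q t ≠ ⊤ := by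
      intro h
      rw [h, add_top] at hq
      exact hfin (top_le_iff.mp hq)
    have hrev : pathCost w t q.reverse bp = pathCost w bp q t :=
      (pathCost_reverse w hsymm q bp t).symm
    obtain ⟨bq, hbqB, hbqpart, q', hq'⟩ :=
      first_boundary w part B hB bp q.reverse t (Ne.symm hbt) (by rw [hrev]; exact hqfin)
    have h2 : gdist w bp bq + gdist w bq t ≤ pathCost w bp q t := by
      rw [gdist_symm w hsymm bp bq, gdist_symm w hsymm bq t, add_comm, ← hrev]
      calc gdist w t bq + gdist w bq bp
          ≤ gdist w t bq + pathCost w bq q' bp := by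
            gcongr; exact gdist_le_pathCost w bq bp q'
        _ ≤ pathCost w t q.reverse bp := hq'
    calc (⨅ bp ∈ (B.filter fun b => part b = part s),
            ⨅ bq ∈ (B.filter fun b => part b = part t),
              gdist w s bp + gdist w bp bq + gdist w bq t)
        ≤ gdist w s bp + gdist w bp bq + gdist w bq t := by
          refine le_trans (iInf₂_le bp (Finset.mem_filter.2 ⟨hbpB, hbppart⟩)) ?_
          exact iInf₂_le bq (Finset.mem_filter.2 ⟨hbqB, hbqpart⟩)
      _ = gdist w s bp + (gdist w bp bq + gdist w bq t) := add_assoc _ _ _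
      _ ≤ gdist w s bp + pathCost w bp q t := by gcongr
      _ ≤ pathCost w s p t := hq
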